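/- On a probability space let Z be a random covariate vector taking values z = (1, xᵀ, yᵀ)ᵀ, let D be an ℕ-valued random variable whose conditional distribution given Z = z is the one-inflated model h(·, z; β, ω) built from a family of probability mass functions f(·, z; β) with inflation parameter ω ∈ (0,1], and let R be a {0,1}-valued random variable with P(R = 1 | X = x, Y = y, D = k) = π(x, k), where π takes values in [0,1] (missing at random). Set φ(z) = Σ_{k=1}^∞ π(x,k) f(k, z; β), and suppose f(1, z; β) > 0 and φ(z) > 0 for all z. Then the conditional expectation E[ R·I(D>0)·π(X,1)/φ(Z) − R·I(D=1)/f(1, Z; β) | Z = z ] equals (1−ω)(1 − f(0, z; β)) π(x,1) { π(x,1)/φ(z) − 1/f(1, z; β) }, and this quantity is ≤ 0. -/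

import Mathlib

open MeasureTheory ProbabilityTheory
open scoped ProbabilityTheory

/-- The one-inflated model with inflation parameter `ω` built from a pmf `f` on `ℕ`. -/
noncomputable def oneInflated (f : ℕ → ℝ) (ω : ℝ) : ℕ → ℝ := fun k =>
  if k = 0 then f 0
  else if k = 1 then (1 - ω) * (1 - f 0) + ω * f 1
  else ω * f k

/-- Conditional expectation of the per-individual score contribution given the covariate
value `Z = z`.  Here `f` is the conditional pmf `f(·, z; β)` of the number of captures at the
fixed covariate value `z`, `π k = π(x, k)` is the non-missingness probability (`x` being the
fully observed part of `z`), `D` is the one-inflated number of captures and `R` the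
missingness indicator. -/
theorem score_cond_expectation_given_z
    {Ω : Type*} [MeasurableSpace Ω] (P : Measure Ω) [IsProbabilityMeasure P]
    {ζ : Type*} (z : ζ)
    (f : ℕ → ℝ) (hf : ∀ k, 0 ≤ f k) (hfsum : Summable f) (hftot : ∑' k, f k = 1)
    (π : ℕ → ℝ) (hπ : ∀ k, π k ∈ Set.Icc (0 : ℝ) 1)
    (ω : ℝ) (hω : ω ∈ Set.Ioc (0 : ℝ) 1)
    (Z : Ω → ζ) (D : Ω → ℕ) (R : Ω → ℝ)
    (hDm : Measurable D) (hRm : Measurable R)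
    (hR01 : ∀ a, R a = 0 ∨ R a = 1)
    (hz : P {a | Z a = z} ≠ 0)
    -- conditional law of the number of captures given `Z = z` is the one-inflated model
    (hD : ∀ k, P[{a | D a = k} | {a | Z a = z}] = ENNReal.ofReal (oneInflated f ω k))
    -- missing at random: `P(R = 1 ∣ Z = z, D = k) = π k`
    (hMAR : ∀ k, P ({a | Z a = z} ∩ {a | D a = k} ∩ {a | R a = 1})
        = ENNReal.ofReal (π k) * P ({a | Z a = z} ∩ {a | D a = k}))
    (hf1 : 0 < f 1) (hφ : 0 < ∑' k, π (k + 1) * f (k + 1)) :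
    (∫ a, (R a * (if 0 < D a then (1 : ℝ) else 0) * π 1 / (∑' k, π (k + 1) * f (k + 1))
          - R a * (if D a = 1 then (1 : ℝ) else 0) / f 1) ∂(P[|{a | Z a = z}]))
        = (1 - ω) * (1 - f 0) * π 1
            * (π 1 / (∑' k, π (k + 1) * f (k + 1)) - 1 / f 1) ∧
      (1 - ω) * (1 - f 0) * π 1
          * (π 1 / (∑' k, π (k + 1) * f (k + 1)) - 1 / f 1) ≤ 0 := by
  obtain ⟨hω0, hω1⟩ := hω
  set A := {a | Z a = z} with hA
  set φ := ∑' k, π (k + 1) * f (k + 1) with hφdef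
  set h := oneInflated f ω with hh
  have hπ0 : ∀ k, 0 ≤ π k := fun k => (hπ k).1
  have hπ1 : ∀ k, π k ≤ 1 := fun k => (hπ k).2
  have hf0le : f 0 ≤ 1 := by
    have := Summable.le_tsum hfsum 0 (fun j _ => hf j); rwa [hftot] at this
  have hh1 : h 1 = (1 - ω) * (1 - f 0) + ω * f 1 := by simp [hh, oneInflated]
  have hh2 : ∀ k, h (k + 2) = ω * f (k + 2) := fun k => by simp [hh, oneInflated]
  have hhnn : ∀ k, 0 ≤ h k := by
    intro k
    match k with
    | 0 => simpa [hh, oneInflated] using hf 0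
    | 1 =>
      rw [hh1]
      have h1 : 0 ≤ (1 - ω) * (1 - f 0) := mul_nonneg (by linarith) (by linarith)
      have h2 : 0 ≤ ω * f 1 := mul_nonneg hω0.le (hf 1)
      linarith
    | (n + 2) => rw [hh2]; exact mul_nonneg hω0.le (hf _)
  -- summability facts
  have hftail : Summable (fun k => f (k + 1)) := (summable_nat_add_iff 1).mpr hfsum
  have hFnn : ∀ k, 0 ≤ π (k + 1) * f (k + 1) := fun k => mul_nonneg (hπ0 _) (hf _)
  have hFsum : Summable (fun k => π (k + 1) * f (k + 1)) :=
    Summable.of_nonneg_of_le hFnn (fun k => mul_le_of_le_one_left (hf _) (hπ1 _)) hftail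
  have hGnn : ∀ k, 0 ≤ π (k + 1) * h (k + 1) := fun k => mul_nonneg (hπ0 _) (hhnn _)
  have hGtailsum : Summable (fun k => π (k + 2) * h (k + 2)) := by
    have : Summable (fun k => ω * (π (k + 2) * f (k + 2))) :=
      (((summable_nat_add_iff 1).mpr hFsum)).mul_left ω
    exact this.congr (fun k => by rw [hh2]; ring)
  have hGsum : Summable (fun k => π (k + 1) * h (k + 1)) :=
    (summable_nat_add_iff 1).mp hGtailsum
  have hφsplit : φ = π 1 * f 1 + ∑' k, π (k + 2) * f (k + 2) := by
    rw [hφdef, Summable.tsum_eq_zero_add hFsum]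
  have hGval : ∑' k, π (k + 1) * h (k + 1) = π 1 * h 1 + ω * (φ - π 1 * f 1) := by
    rw [Summable.tsum_eq_zero_add hGsum]
    have h1 : ∑' k, π (k + 1 + 1) * h (k + 1 + 1) = ω * ∑' k, π (k + 2) * f (k + 2) := by
      rw [← tsum_mul_left]
      exact tsum_congr fun k => by rw [hh2]; ring
    rw [h1]
    have : ∑' k, π (k + 2) * f (k + 2) = φ - π 1 * f 1 := by rw [hφsplit]; ring
    rw [this]
  -- conditional measure computations
  have hcond : ∀ T : Set Ω, MeasurableSet T → (P[|A]) T = (P A)⁻¹ * P (T ∩ A) := by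
    intro T hT
    rw [ProbabilityTheory.cond, Measure.smul_apply, Measure.restrict_apply hT, smul_eq_mul]
  haveI hprob : IsProbabilityMeasure (P[|A]) := by
    constructor
    rw [hcond _ MeasurableSet.univ, Set.univ_inter]
    exact ENNReal.inv_mul_cancel hz (measure_ne_top P A)
  have hR1m : MeasurableSet {a | R a = 1} := hRm (measurableSet_singleton 1)
  have hDkm : ∀ k : ℕ, MeasurableSet {a | D a = k} := fun k => hDm (measurableSet_singleton k)
  have hq : ∀ k, (P[|A]) ({a | D a = k} ∩ {a | R a = 1}) = ENNReal.ofReal (π k * h k) := by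
    intro k
    rw [hcond _ ((hDkm k).inter hR1m)]
    have hset : ({a | D a = k} ∩ {a | R a = 1}) ∩ A = A ∩ {a | D a = k} ∩ {a | R a = 1} := by
      ext a; simp only [Set.mem_inter_iff, Set.mem_setOf_eq]; tauto
    rw [hset, hMAR k]
    have h2 : (P A)⁻¹ * (ENNReal.ofReal (π k) * P (A ∩ {a | D a = k}))
        = ENNReal.ofReal (π k) * ((P A)⁻¹ * P ({a | D a = k} ∩ A)) := by
      rw [Set.inter_comm A]; ring
    rw [h2, ← hcond _ (hDkm k), hD k, ← ENNReal.ofReal_mul (hπ0 k)]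
  have hS1 : {a | 0 < D a} ∩ {a | R a = 1} = ⋃ k, ({a | D a = k + 1} ∩ {a | R a = 1}) := by
    ext a
    simp only [Set.mem_inter_iff, Set.mem_iUnion, Set.mem_setOf_eq]
    constructor
    · rintro ⟨hpos, hr⟩
      exact ⟨D a - 1, by omega, hr⟩
    · rintro ⟨k, hk, hr⟩
      exact ⟨by omega, hr⟩
  have hμS1 : (P[|A]) ({a | 0 < D a} ∩ {a | R a = 1})
      = ENNReal.ofReal (∑' k, π (k + 1) * h (k + 1)) := by
    rw [hS1, measure_iUnion ?_ (fun k => (hDkm (k + 1)).inter hR1m)]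
    · rw [ENNReal.ofReal_tsum_of_nonneg hGnn hGsum]
      exact tsum_congr fun k => hq (k + 1)
    · intro i j hij
      refine Set.disjoint_left.mpr ?_
      rintro a ⟨hai, -⟩ ⟨haj, -⟩
      simp only [Set.mem_setOf_eq] at hai haj
      exact hij (by omega)
  -- rewrite the integrand as a difference of indicators
  have hposm : MeasurableSet {a | 0 < D a} := hDm measurableSet_Ioi
  have hfun : (fun a => R a * (if 0 < D a then (1 : ℝ) else 0) * π 1 / φ
        - R a * (if D a = 1 then (1 : ℝ) else 0) / f 1)
      = fun a => ({a | 0 < D a} ∩ {a | R a = 1}).indicator (fun _ => π 1 / φ) a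
        - ({a | D a = 1} ∩ {a | R a = 1}).indicator (fun _ => 1 / f 1) a := by
    funext a
    rcases hR01 a with hr | hr
    · simp [Set.indicator_apply, hr]
    · by_cases h2 : D a = 1
      · have h1 : 0 < D a := by omega
        simp [Set.indicator_apply, hr, h2, h1]
      · by_cases h1 : 0 < D a <;> simp [Set.indicator_apply, hr, h1, h2]
  have hint1 : Integrable (({a | 0 < D a} ∩ {a | R a = 1}).indicator (fun _ => π 1 / φ))
      (P[|A]) := (integrable_const _).indicator (hposm.inter hR1m)
  have hint2 : Integrable (({a | D a = 1} ∩ {a | R a = 1}).indicator (fun _ => 1 / f 1))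
      (P[|A]) := (integrable_const _).indicator ((hDkm 1).inter hR1m)
  have hG0 : 0 ≤ ∑' k, π (k + 1) * h (k + 1) := tsum_nonneg hGnn
  have hval : (∫ a, (R a * (if 0 < D a then (1 : ℝ) else 0) * π 1 / φ
        - R a * (if D a = 1 then (1 : ℝ) else 0) / f 1) ∂(P[|A]))
      = (∑' k, π (k + 1) * h (k + 1)) * (π 1 / φ) - (π 1 * h 1) * (1 / f 1) := by
    rw [hfun, integral_sub hint1 hint2,
      integral_indicator_const _ (hposm.inter hR1m),
      integral_indicator_const _ ((hDkm 1).inter hR1m),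
      measureReal_def, measureReal_def, hμS1, hq 1, ENNReal.toReal_ofReal hG0,
      ENNReal.toReal_ofReal (mul_nonneg (hπ0 1) (hhnn 1)), smul_eq_mul, smul_eq_mul]
  have hkey : (∑' k, π (k + 1) * h (k + 1)) * (π 1 / φ) - (π 1 * h 1) * (1 / f 1)
      = (1 - ω) * (1 - f 0) * π 1 * (π 1 / φ - 1 / f 1) := by
    rw [hGval, hh1]
    field_simp
    ring
  have hle : (1 - ω) * (1 - f 0) * π 1 * (π 1 / φ - 1 / f 1) ≤ 0 := by
    have hdle : π 1 / φ ≤ 1 / f 1 := by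
      rw [div_le_div_iff₀ hφ hf1]
      have hle' : π 1 * f 1 ≤ φ := by
        have := Summable.le_tsum hFsum 0 (fun j _ => hFnn j)
        simpa [hφdef] using this
      linarith
    refine mul_nonpos_of_nonneg_of_nonpos ?_ (by linarith)
    exact mul_nonneg (mul_nonneg (by linarith) (by linarith)) (hπ0 1)
  exact ⟨hval.trans hkey, hle⟩
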